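/- Let T be an n×n complex contraction (‖T‖ ≤ 1) all of whose eigenvalues lie on the unit circle. Then for every ζ ∈ ℂ not in the spectrum, ‖(ζ - T)^{-1}‖ ≤ 1/dist(ζ, σ(T)), where dist is Euclidean distance to the spectrum. -/

import Mathlib

open scoped Matrix.Norms.L2Operator ComplexOrder Pointwise

private lemma charpoly_eval_eq {n : ℕ} (M : Matrix (Fin n) (Fin n) ℂ) (μ : ℂ) :
    M.charpoly.eval μ = (μ • (1 : Matrix (Fin n) (Fin n) ℂ) - M).det := by
  rw [Matrix.charpoly, ← Polynomial.coe_evalRingHom,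
    RingHom.map_det (Polynomial.evalRingHom μ) (Matrix.charmatrix M)]
  congr 1
  ext i j
  by_cases h : i = j <;>
    simp [h, Matrix.charmatrix_apply, Matrix.one_apply, Matrix.smul_apply,
      Matrix.sub_apply, Matrix.diagonal_apply]

private lemma mem_spectrum_iff_root {n : ℕ} (M : Matrix (Fin n) (Fin n) ℂ) (μ : ℂ) :
    μ ∈ spectrum ℂ M ↔ M.charpoly.IsRoot μ := by
  rw [spectrum.mem_iff, Algebra.algebraMap_eq_smul_one, Matrix.isUnit_iff_isUnit_det,
    isUnit_iff_ne_zero, not_not, Polynomial.IsRoot, charpoly_eval_eq]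

private lemma all_one_of_prod {m : ℕ} (f : Fin m → ℝ) (h0 : ∀ i, 0 ≤ f i)
    (h1 : ∀ i, f i ≤ 1) (hp : ∏ i, f i = 1) : ∀ i, f i = 1 := by
  intro j
  refine le_antisymm (h1 j) ?_
  have herase : f j * ∏ i ∈ Finset.univ.erase j, f i = ∏ i, f i :=
    Finset.mul_prod_erase _ _ (Finset.mem_univ j)
  have hP1 : ∏ i ∈ Finset.univ.erase j, f i ≤ 1 :=
    Finset.prod_le_one (fun i _ => h0 i) (fun i _ => h1 i)
  calc (1 : ℝ) = f j * ∏ i ∈ Finset.univ.erase j, f i := by rw [herase, hp]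
    _ ≤ f j * 1 := mul_le_mul_of_nonneg_left hP1 (h0 j)
    _ = f j := mul_one _

/-- A contraction with unimodular spectrum satisfies linear resolvent growth with
constant 1: `‖(ζ - T)⁻¹‖ ≤ 1 / dist(ζ, σ(T))`. -/
theorem stmt13 (n : ℕ) (T : Matrix (Fin n) (Fin n) ℂ) (hT : ‖T‖ ≤ 1)
    (hspec : ∀ lam ∈ spectrum ℂ T, ‖lam‖ = 1)
    (zeta : ℂ) (hzeta : zeta ∉ spectrum ℂ T) :
    ‖(zeta • (1 : Matrix (Fin n) (Fin n) ℂ) - T)⁻¹‖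
      ≤ 1 / Metric.infDist zeta (spectrum ℂ T) := by
  rcases Nat.eq_zero_or_pos n with hn | hn
  · subst hn
    have h0 : ((zeta • (1 : Matrix (Fin 0) (Fin 0) ℂ) - T)⁻¹) = 0 := Subsingleton.elim _ _
    rw [h0, norm_zero]
    exact div_nonneg zero_le_one Metric.infDist_nonneg
  haveI : Nonempty (Fin n) := ⟨⟨0, hn⟩⟩
  letI : CStarAlgebra (Matrix (Fin n) (Fin n) ℂ) := Matrix.instCStarAlgebra
  -- |det T| = 1
  have hdet : ‖T.det‖ = 1 := by
    rw [Matrix.det_eq_prod_roots_charpoly, ← normHom_apply, map_multiset_prod]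
    refine Multiset.prod_eq_one ?_
    intro x hx
    rw [Multiset.mem_map] at hx
    obtain ⟨μ, hμ, rfl⟩ := hx
    refine hspec μ ?_
    rw [mem_spectrum_iff_root]
    exact (Polynomial.mem_roots (Matrix.charpoly_monic T).ne_zero).mp hμ
  -- Tᴴ * T = 1
  have hps := Matrix.posSemidef_conjTranspose_mul_self T
  have hherm := hps.isHermitian
  have hH : T.conjTranspose * T = 1 := by
    have hnn : ∀ i, 0 ≤ hherm.eigenvalues i := hps.eigenvalues_nonneg
    have hle : ∀ i, hherm.eigenvalues i ≤ 1 := by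
      intro i
      have hmem : ((hherm.eigenvalues i : ℝ) : ℂ) ∈ spectrum ℂ (T.conjTranspose * T) :=
        (spectrum.algebraMap_mem_iff ℂ).mpr (hherm.eigenvalues_mem_spectrum_real i)
      have hb := spectrum.norm_le_norm_of_mem hmem
      have hnorm : ‖T.conjTranspose * T‖ ≤ 1 := by
        have hst : ‖star T * T‖ = ‖T‖ * ‖T‖ := CStarRing.norm_star_mul_self
        rw [Matrix.star_eq_conjTranspose] at hst
        rw [hst]
        calc ‖T‖ * ‖T‖ ≤ 1 * 1 := mul_le_mul hT hT (norm_nonneg _) zero_le_one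
          _ = 1 := one_mul 1
      have habs : ‖((hherm.eigenvalues i : ℝ) : ℂ)‖ = |hherm.eigenvalues i| := by
        rw [Complex.norm_real, Real.norm_eq_abs]
      rw [habs] at hb
      calc hherm.eigenvalues i ≤ |hherm.eigenvalues i| := le_abs_self _
        _ ≤ ‖T.conjTranspose * T‖ := hb
        _ ≤ 1 := hnorm
    have hdetH : (T.conjTranspose * T).det = 1 := by
      rw [Matrix.det_mul, Matrix.det_conjTranspose, Complex.star_def,
        ← Complex.normSq_eq_conj_mul_self, Complex.normSq_eq_norm_sq, hdet]
      norm_num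
    have hprodC := hherm.det_eq_prod_eigenvalues
    rw [hdetH] at hprodC
    have hprod : ∏ i, hherm.eigenvalues i = 1 := by
      have h2 : (RCLike.ofReal (∏ i, hherm.eigenvalues i) : ℂ)
          = (RCLike.ofReal (1 : ℝ) : ℂ) := by
        rw [RCLike.ofReal_prod, RCLike.ofReal_one]
        exact hprodC.symm
      exact RCLike.ofReal_injective h2
    have hall : ∀ i, hherm.eigenvalues i = 1 := all_one_of_prod _ hnn hle hprod
    have hdiag : Matrix.diagonal (RCLike.ofReal ∘ hherm.eigenvalues) =
        (1 : Matrix (Fin n) (Fin n) ℂ) := by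
      ext i j
      rcases eq_or_ne i j with rfl | h
      · simp [hall i]
      · simp [Matrix.diagonal_apply_ne _ h, Matrix.one_apply_ne h]
    have hsp := hherm.spectral_theorem
    rw [hdiag, map_one] at hsp
    exact hsp
  have hH' : T * T.conjTranspose = 1 := mul_eq_one_comm.mp hH
  -- the resolvent matrix
  set A := zeta • (1 : Matrix (Fin n) (Fin n) ℂ) - T with hA_def
  have hA_alg : A = algebraMap ℂ (Matrix (Fin n) (Fin n) ℂ) zeta - T := by
    rw [Algebra.algebraMap_eq_smul_one]
  have hA_unit : IsUnit A := by
    rw [hA_alg]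
    exact spectrum.notMem_iff.mp hzeta
  -- A is star-normal
  have hstarA : star A = (starRingEnd ℂ zeta) • (1 : Matrix (Fin n) (Fin n) ℂ) - star T := by
    rw [hA_def, star_sub, star_smul, star_one]
    rfl
  have hTcomm : star T * T = T * star T := by
    rw [Matrix.star_eq_conjTranspose, hH, hH']
  have hA_comm : star A * A = A * star A := by
    rw [hstarA, hA_def]
    simp only [sub_mul, mul_sub, smul_mul_assoc, Matrix.mul_smul, one_mul, mul_one,
      smul_smul, smul_sub]
    rw [hTcomm, mul_comm zeta]
    abel
  have hAinv_normal : IsStarNormal A⁻¹ := by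
    constructor
    have hstinv : star (A⁻¹) = (star A)⁻¹ := by
      rw [Matrix.star_eq_conjTranspose, Matrix.star_eq_conjTranspose,
        Matrix.conjTranspose_nonsing_inv]
    rw [Commute, SemiconjBy, hstinv, ← Matrix.mul_inv_rev, ← Matrix.mul_inv_rev, hA_comm]
  -- infDist is positive
  have hfin : (spectrum ℂ T).Finite := Matrix.finite_spectrum T
  have hne : (spectrum ℂ T).Nonempty := spectrum.nonempty T
  have hd : 0 < Metric.infDist zeta (spectrum ℂ T) :=
    (hfin.isClosed.notMem_iff_infDist_pos hne).mp hzeta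
  set d := Metric.infDist zeta (spectrum ℂ T) with hd_def
  -- every element of the spectrum of A⁻¹ has modulus ≤ 1/d
  have hkey : ∀ μ ∈ spectrum ℂ (A⁻¹), ‖μ‖ ≤ 1 / d := by
    intro μ hμ
    have hAinv_unit : IsUnit (A⁻¹) := by
      have h := (hA_unit.unit⁻¹).isUnit
      rwa [Matrix.coe_units_inv, IsUnit.unit_spec] at h
    have hμ0 : μ ≠ 0 := by
      intro h
      rw [h] at hμ
      exact (spectrum.zero_notMem_iff ℂ).mpr hAinv_unit hμ
    have hinv_mem : μ⁻¹ ∈ spectrum ℂ A := by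
      have h1 : ((Units.mk0 μ hμ0 : ℂˣ) : ℂ) ∈ spectrum ℂ ((hA_unit.unit⁻¹ : (Matrix (Fin n) (Fin n) ℂ)ˣ) : Matrix (Fin n) (Fin n) ℂ) := by
        rw [Matrix.coe_units_inv]
        simpa [IsUnit.unit_spec] using hμ
      have h2 := spectrum.inv_mem_iff.mp h1
      simpa [IsUnit.unit_spec] using h2
    have hmemsub : μ⁻¹ ∈ ({zeta} : Set ℂ) - spectrum ℂ T := by
      rw [spectrum.singleton_sub_eq, ← hA_alg]
      exact hinv_mem
    obtain ⟨z, hz, lam, hlam, hzl⟩ := hmemsub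
    rw [Set.mem_singleton_iff] at hz
    rw [hz] at hzl
    have hdist : d ≤ ‖zeta - lam‖ := by
      have := Metric.infDist_le_dist_of_mem (x := zeta) hlam
      rwa [Complex.dist_eq] at this
    have hzl' : zeta - lam = μ⁻¹ := hzl
    have habs : ‖μ‖ = 1 / ‖zeta - lam‖ := by
      rw [hzl', norm_inv, one_div, inv_inv]
    rw [habs]
    apply one_div_le_one_div_of_le hd
    exact hdist
  -- conclude via the spectral radius
  have hsr : spectralRadius ℂ (A⁻¹) = (‖A⁻¹‖₊ : ENNReal) :=
    IsStarNormal.spectralRadius_eq_nnnorm (A⁻¹)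
  have hbound : (‖A⁻¹‖₊ : ENNReal) ≤ ENNReal.ofReal (1 / d) := by
    rw [← hsr, spectralRadius]
    refine iSup₂_le ?_
    intro μ hμ
    rw [← enorm_eq_nnnorm, ← ofReal_norm]
    exact ENNReal.ofReal_le_ofReal (hkey μ hμ)
  rw [← enorm_eq_nnnorm, ← ofReal_norm] at hbound
  rw [ENNReal.ofReal_le_ofReal_iff (by positivity)] at hbound
  exact hbound
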